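/- The staging transformation u_1 = q_1, u_k = q_k - ((k-1)q_{k+1} + q_1)/k for k = 2,...,N (with q_{N+1} = q_1) is a linear bijection on ℝ^N with inverse given by q_1 = u_1 and q_k = u_1 + Σ_{k'=k}^{N} ((k-1)/(k'-1)) u_{k'} for k = 2,...,N. -/

import Mathlib

/-- The staging transformation: `u_1 = q_1`,
`u_k = q_k - ((k-1) q_{k+1} + q_1)/k` for `k = 2, …, N`, with `q_{N+1} = q_1`.
Indices `k = 1, …, N` are represented by `i : Fin N` with `k = i + 1`
(`Fin` addition wraps, realizing the convention `q_{N+1} = q_1`). -/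
noncomputable def stagingT (N : ℕ) [NeZero N] (q : Fin N → ℝ) : Fin N → ℝ :=
  fun i =>
    if i.val = 0 then q 0
    else q i - ((i.val : ℝ) * q (i + 1) + q 0) / ((i.val : ℝ) + 1)

/-- The claimed inverse: `q_1 = u_1`,
`q_k = u_1 + ∑_{k'=k}^N ((k-1)/(k'-1)) u_{k'}` for `k = 2, …, N`. -/
noncomputable def stagingS (N : ℕ) [NeZero N] (u : Fin N → ℝ) : Fin N → ℝ :=
  fun i =>
    if i.val = 0 then u 0
    else u 0 + ∑ j ∈ Finset.univ.filter (fun j : Fin N => i.val ≤ j.val),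
      ((i.val : ℝ) / (j.val : ℝ)) * u j

/-- Extend a function on `Fin N` to `ℕ` by reduction mod `N`. -/
noncomputable def stagingExt (N : ℕ) [NeZero N] (q : Fin N → ℝ) : ℕ → ℝ :=
  fun m => q ⟨m % N, Nat.mod_lt _ (NeZero.pos N)⟩

lemma stagingExt_val (N : ℕ) [NeZero N] (q : Fin N → ℝ) (j : Fin N) :
    stagingExt N q j.val = q j := by
  unfold stagingExt
  congr 1
  exact Fin.ext (Nat.mod_eq_of_lt j.isLt)

lemma stagingExt_zero (N : ℕ) [NeZero N] (q : Fin N → ℝ) :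
    stagingExt N q 0 = q 0 := by
  unfold stagingExt
  congr 1

lemma stagingExt_N (N : ℕ) [NeZero N] (q : Fin N → ℝ) :
    stagingExt N q N = q 0 := by
  unfold stagingExt
  congr 1
  exact Fin.ext (by simp)

/-- Convert a filtered sum over `Fin N` into a sum over `Finset.Ico a N`. -/
lemma staging_filter_sum (N : ℕ) [NeZero N] (a : ℕ) (F : ℕ → ℝ) :
    ∑ j ∈ Finset.univ.filter (fun j : Fin N => a ≤ j.val), F j.val
      = ∑ m ∈ Finset.Ico a N, F m := by
  rw [Finset.sum_filter]
  rw [Fin.sum_univ_eq_sum_range (fun m => if a ≤ m then F m else 0)]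
  rw [← Finset.sum_filter]
  congr 1
  ext m
  simp [Finset.mem_Ico, Finset.mem_filter, Finset.mem_range, and_comm]

theorem stmt4 (N : ℕ) [NeZero N] (hN : 2 ≤ N) :
    Function.Bijective (stagingT N) ∧
    (∀ q : Fin N → ℝ, stagingS N (stagingT N q) = q) ∧
    (∀ u : Fin N → ℝ, stagingT N (stagingS N u) = u) := by
  have hNpos : 0 < N := NeZero.pos N
  -- value of `stagingT` at a nonzero index, in terms of the extension
  have hT : ∀ (q : Fin N → ℝ) (j : Fin N), j.val ≠ 0 →
      stagingT N q j = stagingExt N q j.val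
        - ((j.val : ℝ) * stagingExt N q (j.val + 1) + stagingExt N q 0)
          / ((j.val : ℝ) + 1) := by
    intro q j hj
    unfold stagingT
    rw [if_neg hj, stagingExt_val, stagingExt_zero]
    have h1 : q (j + 1) = stagingExt N q (j.val + 1) := by
      unfold stagingExt
      congr 1
      apply Fin.ext
      simp only [Fin.val_add, Fin.val_one', Fin.val_mk,
        Nat.mod_eq_of_lt (show 1 < N from hN)]
    rw [h1]
  have hST : ∀ q : Fin N → ℝ, stagingS N (stagingT N q) = q := by
    intro q
    funext i
    set Q := stagingExt N q with hQ
    by_cases hi : i.val = 0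
    · have : i = 0 := Fin.ext hi
      subst this
      simp [stagingS, stagingT]
    · have ha1 : 1 ≤ i.val := Nat.one_le_iff_ne_zero.mpr hi
      have haN : i.val < N := i.isLt
      unfold stagingS
      rw [if_neg hi]
      -- first value
      have h0 : stagingT N q 0 = q 0 := by simp [stagingT]
      rw [h0]
      set a : ℕ := i.val with haa
      -- rewrite the summand as a function of `j.val`
      have hsum : ∑ j ∈ Finset.univ.filter (fun j : Fin N => a ≤ j.val),
          ((a : ℝ) / (j.val : ℝ)) * stagingT N q j
          = ∑ m ∈ Finset.Ico a N,
            ((a : ℝ) / (m : ℝ)) * (Q m - ((m : ℝ) * Q (m + 1) + Q 0) / ((m : ℝ) + 1)) := by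
        rw [← staging_filter_sum N a
          (fun m => ((a : ℝ) / (m : ℝ)) * (Q m - ((m : ℝ) * Q (m + 1) + Q 0) / ((m : ℝ) + 1)))]
        apply Finset.sum_congr rfl
        intro j hj
        simp only [Finset.mem_filter] at hj
        have hjne : j.val ≠ 0 := by omega
        rw [hT q j hjne]
      rw [hsum]
      -- telescoping
      have hterm : ∀ m ∈ Finset.Ico a N,
          ((a : ℝ) / (m : ℝ)) * (Q m - ((m : ℝ) * Q (m + 1) + Q 0) / ((m : ℝ) + 1))
          = (((a : ℝ) / (m : ℝ)) * Q m - ((a : ℝ) / ((m : ℝ) + 1)) * Q (m + 1))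
            - (((a : ℝ) / (m : ℝ)) * Q 0 - ((a : ℝ) / ((m : ℝ) + 1)) * Q 0) := by
        intro m hm
        simp only [Finset.mem_Ico] at hm
        have hm1 : 1 ≤ m := le_trans ha1 hm.1
        have hmR : (m : ℝ) ≠ 0 := Nat.cast_ne_zero.mpr (by omega)
        have hm1R : (m : ℝ) + 1 ≠ 0 := by positivity
        field_simp
        ring
      rw [Finset.sum_congr rfl hterm, Finset.sum_sub_distrib]
      have haleN : a ≤ N := le_of_lt haN
      have htel1 : ∑ m ∈ Finset.Ico a N,
          (((a : ℝ) / (m : ℝ)) * Q m - ((a : ℝ) / ((m : ℝ) + 1)) * Q (m + 1))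
          = ((a : ℝ) / (a : ℝ)) * Q a - ((a : ℝ) / (N : ℝ)) * Q N := by
        rw [Finset.sum_Ico_eq_sub _ haleN]
        have h1 : ∀ n : ℕ, ∑ m ∈ Finset.range n,
            (((a : ℝ) / (m : ℝ)) * Q m - ((a : ℝ) / ((m : ℝ) + 1)) * Q (m + 1))
            = ((a : ℝ) / (0 : ℝ)) * Q 0 - ((a : ℝ) / (n : ℝ)) * Q n := by
          intro n
          have := Finset.sum_range_sub' (fun m => ((a : ℝ) / (m : ℝ)) * Q m) n
          simpa using this
        rw [h1 N, h1 a]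
        ring
      have htel2 : ∑ m ∈ Finset.Ico a N,
          (((a : ℝ) / (m : ℝ)) * Q 0 - ((a : ℝ) / ((m : ℝ) + 1)) * Q 0)
          = ((a : ℝ) / (a : ℝ)) * Q 0 - ((a : ℝ) / (N : ℝ)) * Q 0 := by
        rw [Finset.sum_Ico_eq_sub _ haleN]
        have h1 : ∀ n : ℕ, ∑ m ∈ Finset.range n,
            (((a : ℝ) / (m : ℝ)) * Q 0 - ((a : ℝ) / ((m : ℝ) + 1)) * Q 0)
            = ((a : ℝ) / (0 : ℝ)) * Q 0 - ((a : ℝ) / (n : ℝ)) * Q 0 := by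
          intro n
          have := Finset.sum_range_sub' (fun m => ((a : ℝ) / (m : ℝ)) * Q 0) n
          simpa using this
        rw [h1 N, h1 a]
        ring
      rw [htel1, htel2]
      have haR : (a : ℝ) ≠ 0 := Nat.cast_ne_zero.mpr (by omega)
      rw [div_self haR]
      have hQN : Q N = q 0 := stagingExt_N N q
      have hQ0 : Q 0 = q 0 := stagingExt_zero N q
      have hQa : Q a = q i := stagingExt_val N q i
      rw [hQN, hQ0, hQa]
      ring
  have hTS : ∀ u : Fin N → ℝ, stagingT N (stagingS N u) = u := by
    intro u
    funext i
    set U := stagingExt N u with hU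
    by_cases hi : i.val = 0
    · have : i = 0 := Fin.ext hi
      subst this
      simp [stagingS, stagingT]
    · have ha1 : 1 ≤ i.val := Nat.one_le_iff_ne_zero.mpr hi
      have haN : i.val < N := i.isLt
      set a : ℕ := i.val with haa
      unfold stagingT
      rw [if_neg hi]
      have hS0 : stagingS N u 0 = u 0 := by simp [stagingS]
      -- `stagingS u` at a nonzero index `b`, as an `Ico` sum
      have hSval : ∀ (j : Fin N), j.val ≠ 0 →
          stagingS N u j = u 0 + ∑ m ∈ Finset.Ico j.val N, ((j.val : ℝ) / (m : ℝ)) * U m := by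
        intro j hj
        unfold stagingS
        rw [if_neg hj]
        congr 1
        rw [← staging_filter_sum N j.val (fun m => ((j.val : ℝ) / (m : ℝ)) * U m)]
        apply Finset.sum_congr rfl
        intro k _
        rw [hU, stagingExt_val]
      have hSi : stagingS N u i = u 0 + ∑ m ∈ Finset.Ico a N, ((a : ℝ) / (m : ℝ)) * U m :=
        hSval i hi
      have haR : (a : ℝ) ≠ 0 := Nat.cast_ne_zero.mpr (by omega)
      have ha1R : (a : ℝ) + 1 ≠ 0 := by positivity
      by_cases hlast : a + 1 = N
      · -- last index wraps to 0
        have hwrap : i + 1 = 0 := by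
          apply Fin.ext
          simp [Fin.val_add, Fin.val_one', Nat.mod_eq_of_lt (show 1 < N from hN), ← hlast]
          rw [← haa, Nat.mod_self]
        rw [hwrap, hS0, hSi]
        have hIco : Finset.Ico a N = {a} := by
          rw [← hlast]
          exact Nat.Ico_succ_singleton a
        rw [hIco, Finset.sum_singleton, div_self haR, one_mul]
        have hUa : U a = u i := stagingExt_val N u i
        rw [hUa]
        field_simp
        ring
      · -- general index
        have hsuc : (i + 1).val = a + 1 := by
          simp [Fin.val_add, Fin.val_one', Nat.mod_eq_of_lt (show 1 < N from hN),
            Nat.mod_eq_of_lt (show a + 1 < N by omega)]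
          rw [← haa]
          exact Nat.mod_eq_of_lt (by omega)
        have hsucne : (i + 1).val ≠ 0 := by omega
        have hSi1 : stagingS N u (i + 1)
            = u 0 + ∑ m ∈ Finset.Ico (a + 1) N, (((a : ℝ) + 1) / (m : ℝ)) * U m := by
          rw [hSval (i + 1) hsucne, hsuc]
          congr 1
          apply Finset.sum_congr rfl
          intro m _
          push_cast
          ring
        rw [hSi, hSi1, hS0]
        have hsplit : ∑ m ∈ Finset.Ico a N, ((a : ℝ) / (m : ℝ)) * U m
            = ((a : ℝ) / (a : ℝ)) * U a
              + ∑ m ∈ Finset.Ico (a + 1) N, ((a : ℝ) / (m : ℝ)) * U m :=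
          Finset.sum_eq_sum_Ico_succ_bot (by omega) _
        rw [hsplit, div_self haR, one_mul]
        have hfac : ∑ m ∈ Finset.Ico (a + 1) N, (((a : ℝ) + 1) / (m : ℝ)) * U m
            = (((a : ℝ) + 1) / (a : ℝ)) * ∑ m ∈ Finset.Ico (a + 1) N, ((a : ℝ) / (m : ℝ)) * U m := by
          rw [Finset.mul_sum]
          apply Finset.sum_congr rfl
          intro m hm
          simp only [Finset.mem_Ico] at hm
          have hmR : (m : ℝ) ≠ 0 := Nat.cast_ne_zero.mpr (by omega)
          field_simp
        rw [hfac]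
        have hUa : U a = u i := stagingExt_val N u i
        rw [hUa]
        field_simp
        ring
  refine ⟨Function.bijective_iff_has_inverse.mpr ⟨stagingS N, hST, hTS⟩, hST, hTS⟩
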